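/- Let -1 ≤ B < A ≤ 1, λ > 1, δ = (1-A)/(1-B), and suppose δ lies in the interval [(λ-[λ]+k)/λ, (λ-[λ]+k+1)/λ) for some k ∈ {0,1,...,[λ]-1}, with λ(1-δ) not an integer. If f ∈ S*(A,B) and (f(z)/z)^{-λ} = 1 + Σ_{n≥1} a_n(-λ,f) zⁿ, then |a_l(-λ,f)| ≤ Π_{j=0}^{l-1} (λ(A-B)+Bj)/(j+1) for l = 1, 2, ..., [λ]-k. -/

import Mathlib

open Metric Complex intervalIntegral


/-- The class `S*(A,B)`. -/
def IsJanowskiStarlike (A B : ℝ) (f : ℂ → ℂ) : Prop :=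
  AnalyticOn ℂ f (ball 0 1) ∧ f 0 = 0 ∧ deriv f 0 = 1 ∧
    ∃ ω : ℂ → ℂ, AnalyticOn ℂ ω (ball 0 1) ∧ (∀ z ∈ ball (0 : ℂ) 1, ‖ω z‖ ≤ 1) ∧
      ∀ z ∈ ball (0 : ℂ) 1,
        z * deriv f z * (1 + (B : ℂ) * z * ω z) = f z * (1 + (A : ℂ) * z * ω z)

/-- `a` is the sequence of Taylor coefficients of the branch of `(f z / z) ^ (-lam)`
normalized to equal `1` at the origin. -/
def NegPowCoeff (lam : ℝ) (f : ℂ → ℂ) (a : ℕ → ℂ) : Prop :=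
  ∃ h : ℂ → ℂ, AnalyticOn ℂ h (ball 0 1) ∧ h 0 = 0 ∧
    (∀ z ∈ ball (0 : ℂ) 1, f z = z * Complex.exp (h z)) ∧
    a 0 = 1 ∧
    ∀ z ∈ ball (0 : ℂ) 1,
      HasSum (fun n : ℕ => a n * z ^ n) (Complex.exp (-(lam : ℂ) * h z))


noncomputable def cser (c : ℕ → ℂ) : FormalMultilinearSeries ℂ ℂ ℂ :=
  fun n => ContinuousMultilinearMap.mkPiRing ℂ (Fin n) (c n)

lemma cser_apply (c : ℕ → ℂ) (n : ℕ) (y : ℂ) : cser c n (fun _ => y) = c n * y ^ n := by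
  simp [cser, ContinuousMultilinearMap.mkPiRing_apply, smul_eq_mul, mul_comm]

lemma cser_norm (c : ℕ → ℂ) (n : ℕ) : ‖cser c n‖ = ‖c n‖ :=
  ContinuousMultilinearMap.norm_mkPiRing _

lemma summable_norm_of_rep {c : ℕ → ℂ} {v : ℂ → ℂ}
    (hc : ∀ z ∈ ball (0:ℂ) 1, HasSum (fun m => c m * z ^ m) (v z))
    {r : ℝ} (hr0 : 0 ≤ r) (hr1 : r < 1) : Summable (fun m => ‖c m‖ * r ^ m) := by
  have hz : (r:ℂ) ∈ ball (0:ℂ) 1 := by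
    simp only [mem_ball, dist_zero_right, Complex.norm_real, Real.norm_eq_abs]
    rwa [_root_.abs_of_nonneg hr0]
  have := (hc r hz).summable
  have h2 := summable_norm_iff.mpr this
  have heq : ∀ m, ‖c m * (r:ℂ)^m‖ = ‖c m‖ * r^m := fun m => by
    rw [norm_mul, norm_pow, Complex.norm_real, Real.norm_eq_abs, _root_.abs_of_nonneg hr0]
  rwa [funext heq] at h2

lemma rep_hasFPowerSeries {c : ℕ → ℂ} {v : ℂ → ℂ}
    (hc : ∀ z ∈ ball (0:ℂ) 1, HasSum (fun m => c m * z ^ m) (v z)) :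
    HasFPowerSeriesOnBall v (cser c) 0 1 := by
  constructor
  · refine ENNReal.le_of_forall_nnreal_lt (fun ρ hρ => ?_)
    apply FormalMultilinearSeries.le_radius_of_summable
    simp only [cser_norm]
    exact summable_norm_of_rep hc ρ.coe_nonneg (by exact_mod_cast hρ)
  · exact one_pos
  · intro y hy
    simp only [Metric.mem_eball, edist_zero_right, enorm_eq_nnnorm] at hy
    have : y ∈ ball (0:ℂ) 1 := by
      simp only [mem_ball, dist_zero_right]
      exact_mod_cast hy
    simpa only [cser_apply, zero_add] using hc y this

lemma rep_analyticOnNhd {c : ℕ → ℂ} {v : ℂ → ℂ}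
    (hc : ∀ z ∈ ball (0:ℂ) 1, HasSum (fun m => c m * z ^ m) (v z)) :
    AnalyticOnNhd ℂ v (ball 0 1) := by
  intro z hz
  have := (rep_hasFPowerSeries hc).analyticOnNhd
  apply this
  simpa [Metric.mem_eball, edist_zero_right, enorm_eq_nnnorm, ← Complex.dist_eq, dist_zero_right,
    ENNReal.coe_lt_one_iff, ← NNReal.coe_lt_one ] using hz

noncomputable section
local notation "π" => Real.pi

lemma conj_int (u : ℝ → ℂ) (a b : ℝ) :
    ∫ t in a..b, (starRingEnd ℂ) (u t) = (starRingEnd ℂ) (∫ t in a..b, u t) := by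
  rw [intervalIntegral.intervalIntegral_eq_integral_uIoc,
    intervalIntegral.intervalIntegral_eq_integral_uIoc, integral_conj]
  rcases le_total a b with h|h <;> split_ifs with h2 <;> simp [map_smul]

lemma orth (m : ℤ) : ∫ t in (0:ℝ)..(2*π), Complex.exp (m * t * I)
    = if m = 0 then (2*π:ℂ) else 0 := by
  split_ifs with h
  · simp only [h, Int.cast_zero, zero_mul, Complex.exp_zero, if_pos]
    rw [intervalIntegral.integral_const]
    simp
  · have hc : (m:ℂ) * I ≠ 0 := by
      simp [Complex.ext_iff]
      exact_mod_cast h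
    have : ∀ t:ℝ, (m:ℂ) * t * I = (m * I) * t := by intro t; ring
    simp_rw [this]
    rw [integral_exp_mul_complex hc]
    have h1 : (m:ℂ) * I * (2*π:ℝ) = m * (2 * π * I) := by push_cast; ring
    rw [h1, Complex.exp_int_mul_two_pi_mul_I m]
    simp

-- conj of exp(j t I)
lemma conj_exp_int (j : ℤ) (t : ℝ) :
    (starRingEnd ℂ) (Complex.exp (j * t * I)) = Complex.exp ((-j : ℤ) * t * I) := by
  rw [← Complex.exp_conj]
  congr 1
  simp [Complex.ext_iff]

lemma exp_mul_exp_int (j m : ℤ) (t : ℝ) :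
    Complex.exp (j * t * I) * Complex.exp (m * t * I) = Complex.exp ((j + m : ℤ) * t * I) := by
  rw [← Complex.exp_add]
  congr 1
  push_cast
  ring
end

noncomputable section
local notation "π" => Real.pi

lemma mul_conj_self (z : ℂ) : z * (starRingEnd ℂ) z = ((‖z‖^2 : ℝ) : ℂ) := by
  rw [Complex.mul_conj]
  norm_cast
  rw [Complex.normSq_eq_norm_sq]

lemma cont_e (j : ℤ) : Continuous (fun t : ℝ => Complex.exp (j * t * I)) := by
  fun_prop

lemma cont_poly (α : ℕ → ℂ) (N : ℕ) :
    Continuous (fun t : ℝ => ∑ j ∈ Finset.range N, α j * Complex.exp ((j:ℂ) * t * I)) := by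
  fun_prop

/-- expansion of pairing against a trigonometric polynomial -/
lemma pair_poly (w : ℝ → ℂ) (hw : Continuous w) (α : ℕ → ℂ) (N : ℕ) :
    ∫ t in (0:ℝ)..(2*π), w t * (starRingEnd ℂ) (∑ j ∈ Finset.range N, α j * Complex.exp ((j:ℂ) * t * I))
      = ∑ j ∈ Finset.range N, (starRingEnd ℂ) (α j) * ∫ t in (0:ℝ)..(2*π), w t * Complex.exp (-(j:ℂ) * t * I) := by
  have hconv : ∀ t : ℝ, w t * (starRingEnd ℂ) (∑ j ∈ Finset.range N, α j * Complex.exp ((j:ℂ) * t * I))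
      = ∑ j ∈ Finset.range N, (starRingEnd ℂ) (α j) * (w t * Complex.exp (-(j:ℂ) * t * I)) := by
    intro t
    rw [map_sum, Finset.mul_sum]
    refine Finset.sum_congr rfl (fun j _ => ?_)
    rw [map_mul]
    have : (starRingEnd ℂ) (Complex.exp ((j:ℂ) * t * I)) = Complex.exp (-(j:ℂ) * t * I) := by
      have := conj_exp_int (j:ℤ) t
      push_cast at this ⊢
      simpa using this
    rw [this]; ring
  simp_rw [hconv]
  rw [intervalIntegral.integral_finset_sum]
  · exact Finset.sum_congr rfl (fun j _ => by
      rw [intervalIntegral.integral_const_mul])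
  · intro j _
    apply Continuous.intervalIntegrable
    fun_prop

/-- Parseval for trigonometric polynomials -/
lemma poly_parseval (α : ℕ → ℂ) (N : ℕ) :
    ∫ t in (0:ℝ)..(2*π),
        (∑ j ∈ Finset.range N, α j * Complex.exp ((j:ℂ) * t * I)) *
          (starRingEnd ℂ) (∑ j ∈ Finset.range N, α j * Complex.exp ((j:ℂ) * t * I))
      = ((2*π * ∑ j ∈ Finset.range N, ‖α j‖^2 : ℝ) : ℂ) := by
  rw [pair_poly _ (cont_poly α N) α N]
  have hin : ∀ j ∈ Finset.range N,
      (∫ t in (0:ℝ)..(2*π),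
        (∑ m ∈ Finset.range N, α m * Complex.exp ((m:ℂ) * t * I)) * Complex.exp (-(j:ℂ) * t * I))
      = α j * ((2*π:ℝ):ℂ) := by
    intro j hj
    have h1 : ∀ t : ℝ, (∑ m ∈ Finset.range N, α m * Complex.exp ((m:ℂ) * t * I)) * Complex.exp (-(j:ℂ) * t * I)
        = ∑ m ∈ Finset.range N, α m * Complex.exp (((m:ℤ) - (j:ℤ) : ℤ) * t * I) := by
      intro t
      rw [Finset.sum_mul]
      refine Finset.sum_congr rfl (fun m _ => ?_)
      rw [mul_assoc, ← Complex.exp_add]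
      congr 2
      push_cast
      ring
    simp_rw [h1]
    rw [intervalIntegral.integral_finset_sum (fun m _ => by
      apply Continuous.intervalIntegrable; fun_prop)]
    have h2 : ∀ m ∈ Finset.range N,
        (∫ t in (0:ℝ)..(2*π), α m * Complex.exp (((m:ℤ) - (j:ℤ) : ℤ) * t * I))
        = if m = j then α j * ((2*π:ℝ):ℂ) else 0 := by
      intro m _
      rw [intervalIntegral.integral_const_mul, orth]
      by_cases hmj : m = j
      · simp [hmj]
      · have : ¬ ((m:ℤ) - (j:ℤ) = 0) := by
          intro hc
          exact hmj (by omega)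
        simp [this, hmj]
    rw [Finset.sum_congr rfl h2, Finset.sum_ite_eq' (Finset.range N) j
      (fun _ => α j * ((2*π:ℝ):ℂ)), if_pos hj]
  rw [Finset.sum_congr rfl (fun j hj => by rw [hin j hj])]
  have : ∀ j : ℕ, (starRingEnd ℂ) (α j) * (α j * ((2*π:ℝ):ℂ))
      = ((2*π:ℝ):ℂ) * ((‖α j‖^2 : ℝ):ℂ) := by
    intro j
    have := mul_conj_self (α j)
    calc (starRingEnd ℂ) (α j) * (α j * ((2*π:ℝ):ℂ))
        = (α j * (starRingEnd ℂ) (α j)) * ((2*π:ℝ):ℂ) := by ring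
      _ = ((2*π:ℝ):ℂ) * ((‖α j‖^2 : ℝ):ℂ) := by rw [this]; ring
  rw [Finset.sum_congr rfl (fun j _ => this j), ← Finset.mul_sum]
  push_cast
  ring
end

noncomputable section
local notation "π" => Real.pi

lemma conj_K : (starRingEnd ℂ) ((((2*π:ℝ)):ℂ))⁻¹ = (((2*π:ℝ)):ℂ)⁻¹ := by
  rw [map_inv₀, Complex.conj_ofReal]

lemma cont_conj {v : ℝ → ℂ} (hv : Continuous v) :
    Continuous (fun t => (starRingEnd ℂ) (v t)) := by
  simp_rw [starRingEnd_apply]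
  exact continuous_star.comp hv

lemma bessel (v : ℝ → ℂ) (hv : Continuous v) (N : ℕ) :
    ∑ j ∈ Finset.range N, ‖∫ t in (0:ℝ)..(2*π), v t * Complex.exp (-(j:ℂ) * t * I)‖^2
      ≤ 2*π * ∫ t in (0:ℝ)..(2*π), ‖v t‖^2 := by
  set cc : ℕ → ℂ := fun j => ∫ t in (0:ℝ)..(2*π), v t * Complex.exp (-(j:ℂ) * t * I) with hcc
  set α : ℕ → ℂ := fun j => ((2*π:ℝ)⁻¹:ℂ) * cc j with hα
  set p : ℝ → ℂ := fun t => ∑ j ∈ Finset.range N, α j * Complex.exp ((j:ℂ) * t * I) with hp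
  have hpc : Continuous p := cont_poly α N
  have hπ : (0:ℝ) < 2*π := by positivity
  -- T2 = ∫ v conj p
  have hT2 : ∫ t in (0:ℝ)..(2*π), v t * (starRingEnd ℂ) (p t)
      = (((2*π:ℝ)⁻¹ * ∑ j ∈ Finset.range N, ‖cc j‖^2 : ℝ) : ℂ) := by
    rw [hp, pair_poly v hv α N]
    have : ∀ j : ℕ, (starRingEnd ℂ) (α j) * cc j
        = (((2*π:ℝ)⁻¹:ℝ):ℂ) * ((‖cc j‖^2:ℝ):ℂ) := by
      intro j
      rw [hα]
      simp only [map_mul]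
      rw [conj_K, mul_assoc, mul_comm ((starRingEnd ℂ) (cc j)) (cc j), mul_conj_self]
      push_cast
      ring
    rw [Finset.sum_congr rfl (fun j _ => this j), ← Finset.mul_sum]
    push_cast
    ring
  -- T4 = ∫ p conj p
  have hT4 : ∫ t in (0:ℝ)..(2*π), p t * (starRingEnd ℂ) (p t)
      = (((2*π:ℝ)⁻¹ * ∑ j ∈ Finset.range N, ‖cc j‖^2 : ℝ) : ℂ) := by
    rw [hp, poly_parseval α N]
    have : ∀ j : ℕ, ‖α j‖^2 = (2*π:ℝ)⁻¹ ^2 * ‖cc j‖^2 := by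
      intro j
      rw [hα]
      simp [norm_mul, mul_pow]
    norm_cast
    rw [Finset.sum_congr rfl (fun j _ => this j), ← Finset.mul_sum]
    field_simp
  -- T3
  have hT3 : ∫ t in (0:ℝ)..(2*π), p t * (starRingEnd ℂ) (v t)
      = (((2*π:ℝ)⁻¹ * ∑ j ∈ Finset.range N, ‖cc j‖^2 : ℝ) : ℂ) := by
    have : ∀ t : ℝ, p t * (starRingEnd ℂ) (v t)
        = (starRingEnd ℂ) (v t * (starRingEnd ℂ) (p t)) := by
      intro t; simp [map_mul]; ring
    simp_rw [this]
    rw [conj_int, hT2, Complex.conj_ofReal]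
  -- expand
  have hsub : ∫ t in (0:ℝ)..(2*π), (v t - p t) * (starRingEnd ℂ) (v t - p t)
      = (∫ t in (0:ℝ)..(2*π), v t * (starRingEnd ℂ) (v t))
        - (((2*π:ℝ)⁻¹ * ∑ j ∈ Finset.range N, ‖cc j‖^2 : ℝ) : ℂ) := by
    have hexp : ∀ t : ℝ, (v t - p t) * (starRingEnd ℂ) (v t - p t)
        = v t * (starRingEnd ℂ) (v t) - v t * (starRingEnd ℂ) (p t)
          - p t * (starRingEnd ℂ) (v t) + p t * (starRingEnd ℂ) (p t) := by
      intro t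
      simp only [map_sub]
      ring
    simp_rw [hexp]
    have i1 : IntervalIntegrable (fun t => v t * (starRingEnd ℂ) (v t)) MeasureTheory.volume 0 (2*π) :=
      (hv.mul (cont_conj hv)).intervalIntegrable _ _
    have i2 : IntervalIntegrable (fun t => v t * (starRingEnd ℂ) (p t)) MeasureTheory.volume 0 (2*π) :=
      (hv.mul (cont_conj hpc)).intervalIntegrable _ _
    have i3 : IntervalIntegrable (fun t => p t * (starRingEnd ℂ) (v t)) MeasureTheory.volume 0 (2*π) :=
      (hpc.mul (cont_conj hv)).intervalIntegrable _ _
    have i4 : IntervalIntegrable (fun t => p t * (starRingEnd ℂ) (p t)) MeasureTheory.volume 0 (2*π) :=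
      (hpc.mul (cont_conj hpc)).intervalIntegrable _ _
    rw [intervalIntegral.integral_add ((i1.sub i2).sub i3) i4,
      intervalIntegral.integral_sub (i1.sub i2) i3,
      intervalIntegral.integral_sub i1 i2, hT2, hT3, hT4]
    ring
  -- both sides real
  have hvv : ∫ t in (0:ℝ)..(2*π), v t * (starRingEnd ℂ) (v t)
      = ((∫ t in (0:ℝ)..(2*π), ‖v t‖^2 : ℝ) : ℂ) := by
    simp_rw [mul_conj_self]
    rw [intervalIntegral.integral_ofReal]
  have hvp : ∫ t in (0:ℝ)..(2*π), (v t - p t) * (starRingEnd ℂ) (v t - p t)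
      = ((∫ t in (0:ℝ)..(2*π), ‖v t - p t‖^2 : ℝ) : ℂ) := by
    simp_rw [mul_conj_self]
    rw [intervalIntegral.integral_ofReal]
  rw [hvp, hvv] at hsub
  have hreal : (∫ t in (0:ℝ)..(2*π), ‖v t - p t‖^2 : ℝ)
      = (∫ t in (0:ℝ)..(2*π), ‖v t‖^2 : ℝ) - (2*π:ℝ)⁻¹ * ∑ j ∈ Finset.range N, ‖cc j‖^2 := by
    exact_mod_cast hsub
  have hnn : (0:ℝ) ≤ ∫ t in (0:ℝ)..(2*π), ‖v t - p t‖^2 := by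
    apply intervalIntegral.integral_nonneg (le_of_lt hπ)
    intro t _
    positivity
  rw [hreal] at hnn
  have := (le_sub_iff_add_le.mp (by linarith : (2*π:ℝ)⁻¹ * ∑ j ∈ Finset.range N, ‖cc j‖^2
    ≤ ∫ t in (0:ℝ)..(2*π), ‖v t‖^2))
  calc ∑ j ∈ Finset.range N, ‖cc j‖^2
      = 2*π * ((2*π:ℝ)⁻¹ * ∑ j ∈ Finset.range N, ‖cc j‖^2) := by field_simp
    _ ≤ 2*π * ∫ t in (0:ℝ)..(2*π), ‖v t‖^2 := by
        apply mul_le_mul_of_nonneg_left _ (le_of_lt hπ)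
        linarith
end

noncomputable section
local notation "π" => Real.pi

lemma circ_norm (r : ℝ) (t : ℝ) (hr : 0 ≤ r) : ‖(r:ℂ) * Complex.exp (t * I)‖ = r := by
  rw [norm_mul, Complex.norm_exp_ofReal_mul_I,
    Complex.norm_real, Real.norm_eq_abs, _root_.abs_of_nonneg hr, mul_one]

lemma circ_mem (r : ℝ) (t : ℝ) (hr0 : 0 ≤ r) (hr1 : r < 1) :
    (r:ℂ) * Complex.exp (t * I) ∈ ball (0:ℂ) 1 := by
  rw [mem_ball, dist_zero_right, circ_norm r t hr0]
  exact hr1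

lemma cont_circ {v : ℂ → ℂ} (hv : ContinuousOn v (ball 0 1)) {r : ℝ} (hr0 : 0 ≤ r) (hr1 : r < 1) :
    Continuous (fun t : ℝ => v ((r:ℂ) * Complex.exp (t * I))) := by
  apply hv.comp_continuous (by fun_prop)
  exact fun t => circ_mem r t hr0 hr1

/-- Cauchy coefficient integral of a power series representation. -/
lemma kappa_rep {c : ℕ → ℂ} {v : ℂ → ℂ}
    (hc : ∀ z ∈ ball (0:ℂ) 1, HasSum (fun m => c m * z ^ m) (v z))
    {r : ℝ} (hr0 : 0 < r) (hr1 : r < 1) (j : ℕ) :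
    ∫ t in (0:ℝ)..(2*π), v ((r:ℂ) * Complex.exp (t * I)) * Complex.exp (-(j:ℂ) * t * I)
      = 2*π * c j * r^j := by
  have hπ : (0:ℝ) < 2*π := by positivity
  set F : ℕ → ℝ → ℂ := fun m t => c m * ((r:ℂ) * Complex.exp (t * I))^m * Complex.exp (-(j:ℂ) * t * I)
    with hF
  have hbd : ∀ m : ℕ, ∀ t : ℝ, ‖F m t‖ = ‖c m‖ * r^m := by
    intro m t
    have h1 : ‖Complex.exp ((t:ℂ) * I)‖ = 1 := by
      rw [Complex.norm_exp_ofReal_mul_I]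
    have h2 : ‖Complex.exp (-(j:ℂ) * t * I)‖ = 1 := by
      have e : (-(j:ℂ) * t * I) = ((-(j:ℝ) * t : ℝ):ℂ) * I := by push_cast; ring
      rw [e, Complex.norm_exp_ofReal_mul_I]
    rw [hF]
    simp only [norm_mul, norm_pow, h1, h2, Complex.norm_real, Real.norm_eq_abs,
      _root_.abs_of_nonneg (le_of_lt hr0)]
    ring
  have hsummable := summable_norm_of_rep hc (le_of_lt hr0) hr1
  have hmain : HasSum (fun m => ∫ t in (0:ℝ)..(2*π), F m t)
      (∫ t in (0:ℝ)..(2*π), v ((r:ℂ) * Complex.exp (t * I)) * Complex.exp (-(j:ℂ) * t * I)) := by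
    apply intervalIntegral.hasSum_integral_of_dominated_convergence
      (fun m t => ‖c m‖ * r^m)
    · intro m
      apply Continuous.aestronglyMeasurable
      fun_prop
    · intro m
      filter_upwards with t _
      rw [hbd m t]
    · filter_upwards with t _
      exact hsummable
    · apply Continuous.intervalIntegrable
      exact continuous_const
    · filter_upwards with t _
      exact HasSum.mul_right _ (hc _ (circ_mem r t (le_of_lt hr0) hr1))
  have hval : ∀ m : ℕ, (∫ t in (0:ℝ)..(2*π), F m t)
      = if m = j then 2*π * c j * r^j else 0 := by
    intro m
    have : ∀ t : ℝ, F m t = (c m * r^m) * Complex.exp (((m:ℤ) - (j:ℤ):ℤ) * t * I) := by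
      intro t
      rw [hF]
      simp only
      rw [mul_pow, ← Complex.exp_nat_mul]
      have e : c m * ((r:ℂ)^m * Complex.exp ((m:ℂ) * ((t:ℂ) * I))) * Complex.exp (-(j:ℂ) * t * I)
          = c m * (r:ℂ)^m * (Complex.exp ((m:ℂ) * ((t:ℂ) * I)) * Complex.exp (-(j:ℂ) * t * I)) := by
        ring
      rw [e, ← Complex.exp_add]
      congr 2
      push_cast
      ring
    simp_rw [this]
    rw [intervalIntegral.integral_const_mul, orth]
    by_cases hmj : m = j
    · subst hmj
      simp
      ring
    · have : ¬ ((m:ℤ) - (j:ℤ) = 0) := fun hcon => hmj (by omega)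
      simp [this, hmj]
  rw [funext hval] at hmain
  have h2 : HasSum (fun m => if m = j then 2*π * c j * (r:ℂ)^j else 0)
      ((2*π : ℝ) * c j * (r:ℂ)^j) := by
    have h3 := hasSum_ite_eq j ((2*π:ℝ) * c j * (r:ℂ)^j)
    convert h3 using 2 with m
    by_cases hmj : m = j <;> simp [hmj] <;> (try push_cast) <;> (try ring)
  have h6 := hmain.unique h2
  rw [h6]
  push_cast
  ring
end

noncomputable section
local notation "π" => Real.pi

/-- Cauchy: circle integral of z·q(z) vanishes for analytic q. -/
lemma cauchy_zero {q : ℂ → ℂ} (hq : AnalyticOnNhd ℂ q (ball 0 1))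
    {r : ℝ} (hr0 : 0 < r) (hr1 : r < 1) :
    ∫ t in (0:ℝ)..(2*π), ((r:ℂ) * Complex.exp (t * I)) * q ((r:ℂ) * Complex.exp (t * I)) = 0 := by
  have hsub : closedBall (0:ℂ) r ⊆ ball 0 1 := by
    intro z hz
    rw [mem_closedBall, dist_zero_right] at hz
    rw [mem_ball, dist_zero_right]
    exact lt_of_le_of_lt hz hr1
  have h0 := circleIntegral_eq_zero_of_differentiable_on_off_countable (le_of_lt hr0)
    (Set.countable_empty) ((hq.continuousOn).mono hsub)
    (fun z hz => (hq z (hsub (ball_subset_closedBall hz.1))).differentiableAt)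
  rw [circleIntegral] at h0
  simp only [deriv_circleMap, circleMap, zero_add, smul_eq_mul] at h0
  have h1 : ∀ t : ℝ, (r:ℂ) * Complex.exp (t * I) * I * q ((r:ℂ) * Complex.exp (t * I))
      = I * (((r:ℂ) * Complex.exp (t * I)) * q ((r:ℂ) * Complex.exp (t * I))) := by
    intro t; ring
  simp_rw [h1] at h0
  rw [intervalIntegral.integral_const_mul] at h0
  rcases mul_eq_zero.mp h0 with h | h
  · exact absurd h I_ne_zero
  · exact h

/-- tail of a power series representation -/
lemma rep_tail {b : ℕ → ℂ} {φ : ℂ → ℂ}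
    (hφ : ∀ z ∈ ball (0:ℂ) 1, HasSum (fun m => b m * z ^ m) (φ z)) (n : ℕ) :
    ∀ z ∈ ball (0:ℂ) 1, HasSum (fun m => b (m+n) * z ^ m)
      ((fun w => ∑' m, b (m+n) * w ^ m) z) := by
  intro z hz
  apply Summable.hasSum
  by_cases hz0 : z = 0
  · subst hz0
    apply summable_of_ne_finset_zero (s := {0})
    intro m hm
    simp only [Finset.mem_singleton] at hm
    simp [zero_pow hm]
  · have h1 := (hφ z hz).summable
    have h2 := (summable_nat_add_iff n).mpr h1
    have h3 := h2.mul_left ((z^n)⁻¹)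
    have : (fun m => (z^n)⁻¹ * (b (m+n) * z ^ (m+n))) = fun m => b (m+n) * z ^ m := by
      funext m
      rw [pow_add]
      field_simp
    rwa [this] at h3

lemma rep_tail_eq {b : ℕ → ℂ} {φ : ℂ → ℂ}
    (hφ : ∀ z ∈ ball (0:ℂ) 1, HasSum (fun m => b m * z ^ m) (φ z)) (n : ℕ) :
    ∀ z ∈ ball (0:ℂ) 1, z^n * (∑' m, b (m+n) * z ^ m)
      = φ z - ∑ m ∈ Finset.range n, b m * z ^ m := by
  intro z hz
  have h1 : HasSum (fun m => b (m+n) * z ^ (m+n))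
      (φ z - ∑ m ∈ Finset.range n, b m * z ^ m) :=
    ((hasSum_nat_add_iff' n).mpr (hφ z hz))
  have h2 := (rep_tail hφ n z hz).mul_left (z^n)
  have : (fun m => z^n * (b (m+n) * z ^ m)) = fun m => b (m+n) * z ^ (m+n) := by
    funext m
    rw [pow_add]
    ring
  rw [this] at h2
  exact h2.unique h1

lemma rep_tail_analytic {b : ℕ → ℂ} {φ : ℂ → ℂ}
    (hφ : ∀ z ∈ ball (0:ℂ) 1, HasSum (fun m => b m * z ^ m) (φ z)) (n : ℕ) :
    AnalyticOnNhd ℂ (fun w => ∑' m, b (m+n) * w ^ m) (ball 0 1) :=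
  rep_analyticOnNhd (rep_tail hφ n)

/-- coefficients of the derivative -/
lemma rep_deriv {c : ℕ → ℂ} {v : ℂ → ℂ}
    (hc : ∀ z ∈ ball (0:ℂ) 1, HasSum (fun m => c m * z ^ m) (v z)) :
    ∀ z ∈ ball (0:ℂ) 1, HasSum (fun j : ℕ => (j:ℂ) * c j * z ^ j) (z * deriv v z) := by
  intro z hz
  have hp := rep_hasFPowerSeries hc
  have hd := hp.fderiv
  have hzmem : z ∈ Metric.eball (0:ℂ) 1 := by
    rw [mem_ball, dist_zero_right] at hz
    rw [Metric.mem_eball, edist_zero_right, enorm_eq_nnnorm]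
    exact_mod_cast hz
  have h1 := hd.hasSum hzmem
  have h2 := h1.mapL (ContinuousLinearMap.apply ℂ ℂ z)
  simp only [ContinuousLinearMap.apply_apply] at h2
  have h3 : ∀ n : ℕ, ((cser c).derivSeries n (fun _ => z)) z
      = ((n:ℂ)+1) * c (n+1) * z ^ (n+1) := by
    intro n
    rw [FormalMultilinearSeries.derivSeries_apply_diag]
    rw [cser_apply]
    push_cast
    ring
  rw [funext h3] at h2
  have h4 : (fderiv ℂ v (0 + z)) z = z * deriv v z := by
    rw [zero_add]
    conv_lhs => rw [show z = z • (1:ℂ) by simp]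
    rw [ContinuousLinearMap.map_smul, fderiv_apply_one_eq_deriv]
    simp [smul_eq_mul]
  rw [h4] at h2
  refine (hasSum_nat_add_iff' 1).mp ?_
  simpa using h2
end

noncomputable section
local notation "π" => Real.pi

lemma clunie (ω φ : ℂ → ℂ) (hω : AnalyticOnNhd ℂ ω (ball 0 1))
    (hωb : ∀ z ∈ ball (0:ℂ) 1, ‖ω z‖ ≤ 1)
    (b gc : ℕ → ℂ)
    (hφ : ∀ z ∈ ball (0:ℂ) 1, HasSum (fun m : ℕ => b m * z ^ m) (φ z))
    (hg : ∀ z ∈ ball (0:ℂ) 1, HasSum (fun j : ℕ => gc j * z ^ j) (z * ω z * φ z))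
    (n : ℕ) :
    ∑ j ∈ Finset.range (n+1), ‖gc j‖^2 ≤ ∑ m ∈ Finset.range n, ‖b m‖^2 := by
  have hπ : (0:ℝ) < 2*π := by positivity
  set u : ℂ → ℂ := fun z => z * ω z * φ z with hu
  set s : ℂ → ℂ := fun z => ∑ m ∈ Finset.range n, b m * z ^ m with hs
  set ρ : ℂ → ℂ := fun w => ∑' m, b (m+n) * w ^ m with hρ
  set Ψ : ℂ → ℂ := fun z => z * ω z * s z with hΨ
  have hscont : Continuous s := by
    apply continuous_finset_sum
    exact fun m _ => continuous_const.mul (continuous_pow m)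
  have hucont : ContinuousOn u (ball 0 1) := (rep_analyticOnNhd hg).continuousOn
  have hρa : AnalyticOnNhd ℂ ρ (ball 0 1) := rep_tail_analytic hφ n
  -- the main inequality for each radius r
  have main : ∀ r : ℝ, r ∈ Set.Ioo (0:ℝ) 1 →
      ∑ j ∈ Finset.range (n+1), ‖gc j‖^2 * (r^j)^2
        ≤ ∑ m ∈ Finset.range n, ‖b m‖^2 * (r^m)^2 := by
    intro r hr
    obtain ⟨hr0, hr1⟩ := hr
    -- coefficients of Ψ on the circle
    have hcu : ∀ j : ℕ, ∫ t in (0:ℝ)..(2*π), u ((r:ℂ) * Complex.exp (t * I)) *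
        Complex.exp (-(j:ℂ) * t * I) = 2*π * gc j * r^j := fun j => kappa_rep hg hr0 hr1 j
    have hcD : ∀ j : ℕ, j ≤ n → ∫ t in (0:ℝ)..(2*π),
        (u ((r:ℂ) * Complex.exp (t * I)) - Ψ ((r:ℂ) * Complex.exp (t * I))) *
          Complex.exp (-(j:ℂ) * t * I) = 0 := by
      intro j hj
      set q : ℂ → ℂ := fun z => z^(n-j) * (ω z * ρ z) with hq
      have hqa : AnalyticOnNhd ℂ q (ball 0 1) := by
        apply AnalyticOnNhd.mul
        · exact (analyticOnNhd_id).pow _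
        · exact hω.mul hρa
      have hptw : ∀ t : ℝ, (u ((r:ℂ) * Complex.exp (t * I)) - Ψ ((r:ℂ) * Complex.exp (t * I))) *
          Complex.exp (-(j:ℂ) * t * I)
          = (r:ℂ)^j * (((r:ℂ) * Complex.exp (t * I)) * q ((r:ℂ) * Complex.exp (t * I))) := by
        intro t
        set z : ℂ := (r:ℂ) * Complex.exp (t * I) with hz
        have hzmem := circ_mem r t (le_of_lt hr0) hr1
        have htail : z^n * ρ z = φ z - s z := rep_tail_eq hφ n z hzmem
        have h1 : u z - Ψ z = z * ω z * (z^n * ρ z) := by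
          rw [hu, hΨ]
          simp only
          rw [htail]
          ring
        rw [h1, hq]
        simp only
        have hzj : z^j * Complex.exp (-(j:ℂ) * t * I) = (r:ℂ)^j := by
          rw [hz, mul_pow, ← Complex.exp_nat_mul, mul_assoc, ← Complex.exp_add]
          have : (j:ℂ) * ((t:ℂ) * I) + (-(j:ℂ) * t * I) = 0 := by ring
          rw [this, Complex.exp_zero, mul_one]
        have hsplit : z^n = z^j * z^(n-j) := by
          rw [← pow_add]
          congr 1
          omega
        calc z * ω z * (z^n * ρ z) * Complex.exp (-(j:ℂ) * t * I)
            = (z^j * Complex.exp (-(j:ℂ) * t * I)) * (z * (z^(n-j) * (ω z * ρ z))) := by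
              rw [hsplit]; ring
          _ = (r:ℂ)^j * (z * (z^(n-j) * (ω z * ρ z))) := by rw [hzj]
      simp_rw [hptw]
      rw [intervalIntegral.integral_const_mul, cauchy_zero hqa hr0 hr1, mul_zero]
    -- integrability of circle restrictions
    have hωcirc := cont_circ hω.continuousOn (le_of_lt hr0) hr1
    have hucirc := cont_circ hucont (le_of_lt hr0) hr1
    have hΨcirc : Continuous (fun t : ℝ => Ψ ((r:ℂ) * Complex.exp (t * I))) := by
      rw [hΨ]
      simp only
      apply Continuous.mul
      apply Continuous.mul
      · fun_prop
      · exact hωcirc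
      · exact hscont.comp (by fun_prop)
    have hcΨ : ∀ j : ℕ, j ≤ n → ∫ t in (0:ℝ)..(2*π), Ψ ((r:ℂ) * Complex.exp (t * I)) *
        Complex.exp (-(j:ℂ) * t * I) = 2*π * gc j * r^j := by
      intro j hj
      have hsub : ∀ t : ℝ, Ψ ((r:ℂ) * Complex.exp (t * I)) * Complex.exp (-(j:ℂ) * t * I)
          = u ((r:ℂ) * Complex.exp (t * I)) * Complex.exp (-(j:ℂ) * t * I)
            - (u ((r:ℂ) * Complex.exp (t * I)) - Ψ ((r:ℂ) * Complex.exp (t * I))) *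
              Complex.exp (-(j:ℂ) * t * I) := by
        intro t; ring
      simp_rw [hsub]
      have he : Continuous (fun t : ℝ => Complex.exp (-(j:ℂ) * t * I)) := by fun_prop
      have i1 : IntervalIntegrable (fun t : ℝ => u ((r:ℂ) * Complex.exp (t * I)) *
          Complex.exp (-(j:ℂ) * t * I)) MeasureTheory.volume 0 (2*π) :=
        (hucirc.mul he).intervalIntegrable _ _
      have i2 : IntervalIntegrable (fun t : ℝ => (u ((r:ℂ) * Complex.exp (t * I)) -
          Ψ ((r:ℂ) * Complex.exp (t * I))) * Complex.exp (-(j:ℂ) * t * I)) MeasureTheory.volume 0 (2*π) :=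
        ((hucirc.sub hΨcirc).mul he).intervalIntegrable _ _
      rw [intervalIntegral.integral_sub i1 i2, hcu j, hcD j hj, sub_zero]
    -- Bessel
    have hbes := bessel (fun t => Ψ ((r:ℂ) * Complex.exp (t * I))) hΨcirc (n+1)
    have hnorm : ∀ j : ℕ, j ≤ n →
        ‖∫ t in (0:ℝ)..(2*π), Ψ ((r:ℂ) * Complex.exp (t * I)) * Complex.exp (-(j:ℂ) * t * I)‖^2
        = (2*π)^2 * (‖gc j‖^2 * (r^j)^2) := by
      intro j hj
      rw [hcΨ j hj]
      rw [norm_mul, norm_mul]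
      have h2 : ‖((2:ℂ)*π)‖ = 2*π := by
        rw [show ((2:ℂ)*π) = ((2*π:ℝ):ℂ) by push_cast; ring, Complex.norm_real,
          Real.norm_eq_abs, _root_.abs_of_nonneg (le_of_lt hπ)]
      have h3 : ‖((r:ℂ))^j‖ = r^j := by
        rw [norm_pow, Complex.norm_real, Real.norm_eq_abs, _root_.abs_of_nonneg (le_of_lt hr0)]
      rw [h2, h3]
      ring
    have hL : ∑ j ∈ Finset.range (n+1),
        ‖∫ t in (0:ℝ)..(2*π), Ψ ((r:ℂ) * Complex.exp (t * I)) * Complex.exp (-(j:ℂ) * t * I)‖^2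
        = (2*π)^2 * ∑ j ∈ Finset.range (n+1), ‖gc j‖^2 * (r^j)^2 := by
      rw [Finset.mul_sum]
      refine Finset.sum_congr rfl (fun j hj => ?_)
      exact hnorm j (by simpa [Nat.lt_succ_iff] using hj)
    -- compare with s
    have hpt : ∀ t : ℝ, ‖Ψ ((r:ℂ) * Complex.exp (t * I))‖^2
        ≤ ‖s ((r:ℂ) * Complex.exp (t * I))‖^2 := by
      intro t
      apply pow_le_pow_left₀ (norm_nonneg _)
      rw [hΨ]
      simp only
      rw [norm_mul, norm_mul]
      have h1 : ‖(r:ℂ) * Complex.exp (t * I)‖ = r := circ_norm r t (le_of_lt hr0)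
      have h2 := hωb _ (circ_mem r t (le_of_lt hr0) hr1)
      calc ‖(r:ℂ) * Complex.exp (t * I)‖ * ‖ω ((r:ℂ) * Complex.exp (t * I))‖ *
            ‖s ((r:ℂ) * Complex.exp (t * I))‖
          ≤ 1 * 1 * ‖s ((r:ℂ) * Complex.exp (t * I))‖ := by
            apply mul_le_mul_of_nonneg_right _ (norm_nonneg _)
            apply mul_le_mul _ h2 (norm_nonneg _) zero_le_one
            rw [h1]; exact le_of_lt hr1
        _ = ‖s ((r:ℂ) * Complex.exp (t * I))‖ := by ring
    have hint : (∫ t in (0:ℝ)..(2*π), ‖Ψ ((r:ℂ) * Complex.exp (t * I))‖^2)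
        ≤ ∫ t in (0:ℝ)..(2*π), ‖s ((r:ℂ) * Complex.exp (t * I))‖^2 := by
      apply intervalIntegral.integral_mono_on (le_of_lt hπ)
      · exact ((hΨcirc.norm.pow 2)).intervalIntegrable _ _
      · exact (((hscont.comp (show Continuous (fun t : ℝ => (r:ℂ) * Complex.exp (t * I))
          by fun_prop)).norm.pow 2)).intervalIntegrable _ _
      · exact fun t _ => hpt t
    -- Parseval for s on circle
    have hspar : (∫ t in (0:ℝ)..(2*π), ‖s ((r:ℂ) * Complex.exp (t * I))‖^2)
        = 2*π * ∑ m ∈ Finset.range n, ‖b m‖^2 * (r^m)^2 := by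
      set α : ℕ → ℂ := fun m => b m * (r:ℂ)^m with hα
      have hform : ∀ t : ℝ, s ((r:ℂ) * Complex.exp (t * I))
          = ∑ m ∈ Finset.range n, α m * Complex.exp ((m:ℂ) * t * I) := by
        intro t
        rw [hs]
        simp only
        refine Finset.sum_congr rfl (fun m _ => ?_)
        rw [hα]
        simp only
        rw [mul_pow, ← Complex.exp_nat_mul]
        ring_nf
      have hpp := poly_parseval α n
      have hofreal : ((∫ t in (0:ℝ)..(2*π), ‖s ((r:ℂ) * Complex.exp (t * I))‖^2 : ℝ) : ℂ)
          = ((2*π * ∑ m ∈ Finset.range n, ‖α m‖^2 : ℝ) : ℂ) := by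
        rw [← hpp, ← intervalIntegral.integral_ofReal]
        apply intervalIntegral.integral_congr
        intro t _
        simp only
        rw [← mul_conj_self, hform t]
      have := Complex.ofReal_injective hofreal
      rw [this]
      congr 1
      refine Finset.sum_congr rfl (fun m _ => ?_)
      rw [hα]
      simp only
      rw [norm_mul, norm_pow, Complex.norm_real, Real.norm_eq_abs,
        _root_.abs_of_nonneg (le_of_lt hr0)]
      ring
    -- combine
    rw [hL] at hbes
    have hcomb : (2*π)^2 * ∑ j ∈ Finset.range (n+1), ‖gc j‖^2 * (r^j)^2
        ≤ (2*π)^2 * ∑ m ∈ Finset.range n, ‖b m‖^2 * (r^m)^2 := by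
      calc (2*π)^2 * ∑ j ∈ Finset.range (n+1), ‖gc j‖^2 * (r^j)^2
          ≤ 2*π * ∫ t in (0:ℝ)..(2*π), ‖Ψ ((r:ℂ) * Complex.exp (t * I))‖^2 := hbes
        _ ≤ 2*π * ∫ t in (0:ℝ)..(2*π), ‖s ((r:ℂ) * Complex.exp (t * I))‖^2 := by
            exact mul_le_mul_of_nonneg_left hint (le_of_lt hπ)
        _ = (2*π)^2 * ∑ m ∈ Finset.range n, ‖b m‖^2 * (r^m)^2 := by
            rw [hspar]; ring
    exact le_of_mul_le_mul_left hcomb (by positivity)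
  -- limit r → 1
  have hten : ∀ (cf : ℕ → ℂ) (N : ℕ), Filter.Tendsto
      (fun r : ℝ => ∑ j ∈ Finset.range N, ‖cf j‖^2 * (r^j)^2) (nhdsWithin 1 (Set.Iio 1))
      (nhds (∑ j ∈ Finset.range N, ‖cf j‖^2)) := by
    intro cf N
    have hcont : Continuous (fun r : ℝ => ∑ j ∈ Finset.range N, ‖cf j‖^2 * (r^j)^2) := by
      apply continuous_finset_sum
      intro j _
      fun_prop
    have := (hcont.continuousAt (x := (1:ℝ))).continuousWithinAt (s := Set.Iio 1)
    have h1 : (fun r : ℝ => ∑ j ∈ Finset.range N, ‖cf j‖^2 * (r^j)^2) 1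
        = ∑ j ∈ Finset.range N, ‖cf j‖^2 := by
      simp
    rw [← h1]
    exact this
  have hev : ∀ᶠ r in nhdsWithin 1 (Set.Iio (1:ℝ)),
      ∑ j ∈ Finset.range (n+1), ‖gc j‖^2 * (r^j)^2
        ≤ ∑ m ∈ Finset.range n, ‖b m‖^2 * (r^m)^2 := by
    have hmem : Set.Ioo (0:ℝ) 1 ∈ nhdsWithin 1 (Set.Iio (1:ℝ)) :=
      Ioo_mem_nhdsLT_of_mem (by constructor <;> norm_num)
    filter_upwards [hmem] with r hr
    exact main r hr
  exact le_of_tendsto_of_tendsto (hten gc (n+1)) (hten b n) hev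
end

noncomputable section

lemma prod_identity (c0 Bv : ℝ) (n : ℕ) :
    ∑ m ∈ Finset.range n, ((c0 + Bv*m)^2 - (m:ℝ)^2) *
      (∏ j ∈ Finset.range m, (c0 + Bv*j)/(j+1))^2
    = (n:ℝ)^2 * (∏ j ∈ Finset.range n, (c0 + Bv*j)/(j+1))^2 := by
  induction n with
  | zero => simp
  | succ n ih =>
    rw [Finset.sum_range_succ, ih, Finset.prod_range_succ]
    have hne : ((n:ℝ)+1) ≠ 0 := by positivity
    push_cast
    field_simp
    ring
end

set_option maxHeartbeats 1000000 in
theorem coeff_bound_Ik_initial (A B lam δ : ℝ) (hB : -1 ≤ B) (hBA : B < A) (hA : A ≤ 1)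
    (hlam : 1 < lam) (hδ : δ = (1 - A) / (1 - B))
    (k : ℕ) (hk : k ≤ ⌊lam⌋₊ - 1)
    (hδ1 : (lam - ⌊lam⌋₊ + k) / lam ≤ δ) (hδ2 : δ < (lam - ⌊lam⌋₊ + k + 1) / lam)
    (hnotint : ¬ ∃ m : ℤ, lam * (1 - δ) = m)
    (f : ℂ → ℂ) (hf : IsJanowskiStarlike A B f)
    (a : ℕ → ℂ) (ha : NegPowCoeff lam f a)
    (l : ℕ) (hl1 : 1 ≤ l) (hl2 : l ≤ ⌊lam⌋₊ - k) :
    ‖a l‖ ≤ ∏ j ∈ Finset.range l, (lam * (A - B) + B * j) / (j + 1) := by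
  obtain ⟨hfa, hf0, hfd, ω, hωa, hωb, hfeq⟩ := hf
  obtain ⟨h, hha, hh0, hfzh, ha0, hrep⟩ := ha
  have hωa' : AnalyticOnNhd ℂ ω (ball 0 1) :=
    (isOpen_ball.analyticOn_iff_analyticOnNhd).mp hωa
  have hha' : AnalyticOnNhd ℂ h (ball 0 1) :=
    (isOpen_ball.analyticOn_iff_analyticOnNhd).mp hha
  set F : ℂ → ℂ := fun z => Complex.exp (-(lam:ℂ) * h z) with hF
  -- real constants
  have hlam0 : (0:ℝ) < lam := by linarith
  have hB1 : B < 1 := lt_of_lt_of_le hBA hA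
  have h1B : (0:ℝ) < 1 - B := by linarith
  have hfl : 1 ≤ ⌊lam⌋₊ := Nat.le_floor (by exact_mod_cast le_of_lt hlam)
  have hkfl : k + 1 ≤ ⌊lam⌋₊ := by omega
  have hcast : ((⌊lam⌋₊ - k : ℕ):ℝ) = (⌊lam⌋₊:ℝ) - k := by
    rw [Nat.cast_sub (by omega)]
  have hδval : δ * (1-B) = 1 - A := by
    rw [hδ]; field_simp
  have hABδ : A - B = (1-B)*(1-δ) := by linear_combination hδval
  have hδlt : (⌊lam⌋₊:ℝ) - k - 1 < lam * (1-δ) := by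
    have h2 : δ * lam < lam - ⌊lam⌋₊ + k + 1 := (lt_div_iff₀ hlam0).mp hδ2
    nlinarith
  set c0 : ℝ := lam * (A - B) with hc0
  have hpos : ∀ m : ℕ, (m:ℝ) + 1 ≤ ((⌊lam⌋₊ - k : ℕ):ℝ) → (m:ℝ) < c0 + B*m := by
    intro m hm
    rw [hcast] at hm
    have h2 : (m:ℝ) < lam * (1-δ) := by linarith
    have h3 : c0 + B*m - m = (1-B)*(lam*(1-δ) - m) := by
      rw [hc0]
      linear_combination lam * hABδ
    nlinarith [mul_pos h1B (sub_pos.mpr h2)]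
  set P : ℕ → ℝ := fun n => ∏ j ∈ Finset.range n, (lam * (A - B) + B * j) / (j + 1) with hP
  have hPpos : ∀ n : ℕ, (n:ℕ) ≤ ⌊lam⌋₊ - k → 0 < P n := by
    intro n hn
    rw [hP]
    apply Finset.prod_pos
    intro j hj
    rw [Finset.mem_range] at hj
    apply div_pos
    · have hj1 : (j:ℝ) + 1 ≤ ((⌊lam⌋₊ - k : ℕ):ℝ) := by
        have : j + 1 ≤ ⌊lam⌋₊ - k := by omega
        exact_mod_cast this
      have := hpos j hj1
      have hjnn : (0:ℝ) ≤ (j:ℝ) := Nat.cast_nonneg j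
      rw [hc0] at this
      linarith
    · positivity
  -- derivative representation
  have gRep := rep_deriv hrep
  set φ : ℂ → ℂ := fun z => (-(lam:ℂ)) * ((A:ℂ) - (B:ℂ)) * F z - (B:ℂ) * (z * deriv F z)
    with hφdef
  set bc : ℕ → ℂ := fun m => -(((c0 + B*m : ℝ)):ℂ) * a m with hbc
  have hφrep : ∀ z ∈ ball (0:ℂ) 1, HasSum (fun m : ℕ => bc m * z ^ m) (φ z) := by
    intro z hz
    have h1 := (hrep z hz).mul_left ((-(lam:ℂ)) * ((A:ℂ) - (B:ℂ)))
    have h2 := (gRep z hz).mul_left ((B:ℂ))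
    have h3 := h1.sub h2
    have : (fun m : ℕ => (-(lam:ℂ)) * ((A:ℂ) - (B:ℂ)) * (a m * z ^ m)
        - (B:ℂ) * ((m:ℂ) * a m * z ^ m)) = fun m : ℕ => bc m * z ^ m := by
      funext m
      rw [hbc]
      simp only
      push_cast [hc0]
      ring
    rwa [this] at h3
  -- functional equation
  have heq : ∀ z ∈ ball (0:ℂ) 1, z * deriv F z = z * ω z * φ z := by
    intro z hz
    by_cases hz0 : z = 0
    · subst hz0; simp
    · have hd_h : HasDerivAt h (deriv h z) z :=
        ((hha' z hz).differentiableAt).hasDerivAt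
      have hFd : deriv F z = F z * (-(lam:ℂ) * deriv h z) := by
        have hd : HasDerivAt F (Complex.exp (-(lam:ℂ) * h z) * (-(lam:ℂ) * deriv h z)) z :=
          (hd_h.const_mul (-(lam:ℂ))).cexp
        rw [hF]
        exact hd.deriv
      have hfd' : deriv f z = Complex.exp (h z) + z * deriv h z * Complex.exp (h z) := by
        have hev : f =ᶠ[nhds z] (fun w => w * Complex.exp (h w)) := by
          filter_upwards [isOpen_ball.mem_nhds hz] with w hw
          exact hfzh w hw
        rw [hev.deriv_eq]
        have hd : HasDerivAt (fun w => w * Complex.exp (h w))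
            (1 * Complex.exp (h z) + z * (Complex.exp (h z) * deriv h z)) z :=
          (hasDerivAt_id z).mul (hd_h.cexp)
        rw [hd.deriv]
        ring
      have hz_exp : z * Complex.exp (h z) ≠ 0 :=
        mul_ne_zero hz0 (Complex.exp_ne_zero _)
      have heq2 : (1 + z * deriv h z) * (1 + (B:ℂ) * z * ω z) = 1 + (A:ℂ) * z * ω z := by
        have he := hfeq z hz
        rw [hfd', hfzh z hz] at he
        apply mul_left_cancel₀ hz_exp
        calc z * Complex.exp (h z) * ((1 + z * deriv h z) * (1 + (B:ℂ) * z * ω z))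
            = z * (Complex.exp (h z) + z * deriv h z * Complex.exp (h z))
              * (1 + (B:ℂ) * z * ω z) := by ring
          _ = z * Complex.exp (h z) * (1 + (A:ℂ) * z * ω z) := he
      rw [hFd, hφdef]
      simp only
      rw [hFd]
      linear_combination (-(lam:ℂ)) * F z * heq2
  have hgRep2 : ∀ z ∈ ball (0:ℂ) 1, HasSum (fun j : ℕ => (j:ℂ) * a j * z ^ j)
      (z * ω z * φ z) := by
    intro z hz
    rw [← heq z hz]
    exact gRep z hz
  -- clunie inequality
  have key : ∀ n : ℕ, ∑ j ∈ Finset.range (n+1), (j:ℝ)^2 * ‖a j‖^2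
      ≤ ∑ m ∈ Finset.range n, (c0 + B*m)^2 * ‖a m‖^2 := by
    intro n
    have hcl := clunie ω φ hωa' hωb bc (fun j => (j:ℂ) * a j) hφrep hgRep2 n
    have hL : ∀ j : ℕ, ‖(j:ℂ) * a j‖^2 = (j:ℝ)^2 * ‖a j‖^2 := by
      intro j
      rw [norm_mul, mul_pow]
      congr 1
      rw [Complex.norm_natCast]
    have hR : ∀ m : ℕ, ‖bc m‖^2 = (c0 + B*m)^2 * ‖a m‖^2 := by
      intro m
      rw [hbc]
      simp only
      rw [norm_mul, mul_pow, norm_neg, Complex.norm_real, Real.norm_eq_abs, _root_.sq_abs]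
    calc ∑ j ∈ Finset.range (n+1), (j:ℝ)^2 * ‖a j‖^2
        = ∑ j ∈ Finset.range (n+1), ‖(j:ℂ) * a j‖^2 := by
          exact (Finset.sum_congr rfl (fun j _ => (hL j).symm))
      _ ≤ ∑ m ∈ Finset.range n, ‖bc m‖^2 := hcl
      _ = ∑ m ∈ Finset.range n, (c0 + B*m)^2 * ‖a m‖^2 :=
          Finset.sum_congr rfl (fun m _ => hR m)
  -- induction
  have claim : ∀ n : ℕ, n ≤ ⌊lam⌋₊ - k → ‖a n‖ ≤ P n := by
    intro n
    induction n using Nat.strong_induction_on with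
    | _ n ih =>
      intro hn
      rcases Nat.eq_zero_or_pos n with hn0 | hn1
      · subst hn0
        rw [ha0]
        simp [hP]
      · -- key inequality
        have hkey := key n
        rw [Finset.sum_range_succ] at hkey
        have hstep : (n:ℝ)^2 * ‖a n‖^2
            ≤ ∑ m ∈ Finset.range n, ((c0 + B*m)^2 - (m:ℝ)^2) * ‖a m‖^2 := by
          have hsplit : ∑ m ∈ Finset.range n, ((c0 + B*m)^2 - (m:ℝ)^2) * ‖a m‖^2
              = ∑ m ∈ Finset.range n, (c0 + B*m)^2 * ‖a m‖^2
                - ∑ m ∈ Finset.range n, (m:ℝ)^2 * ‖a m‖^2 := by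
            rw [← Finset.sum_sub_distrib]
            exact Finset.sum_congr rfl (fun m _ => by ring)
          rw [hsplit]
          linarith
        have hterm : ∀ m ∈ Finset.range n, ((c0 + B*m)^2 - (m:ℝ)^2) * ‖a m‖^2
            ≤ ((c0 + B*m)^2 - (m:ℝ)^2) * (P m)^2 := by
          intro m hm
          rw [Finset.mem_range] at hm
          have hmle : m ≤ ⌊lam⌋₊ - k := by omega
          have hm1 : (m:ℝ) + 1 ≤ ((⌊lam⌋₊ - k : ℕ):ℝ) := by
            have : m + 1 ≤ ⌊lam⌋₊ - k := by omega
            exact_mod_cast this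
          have hp := hpos m hm1
          have hmnn : (0:ℝ) ≤ (m:ℝ) := Nat.cast_nonneg m
          have hco : (0:ℝ) ≤ (c0 + B*m)^2 - (m:ℝ)^2 := by nlinarith
          apply mul_le_mul_of_nonneg_left _ hco
          have := ih m hm hmle
          have hPm := hPpos m hmle
          nlinarith [norm_nonneg (a m)]
        have hid := prod_identity c0 B n
        have hPn := hPpos n hn
        have hfin : (n:ℝ)^2 * ‖a n‖^2 ≤ (n:ℝ)^2 * (P n)^2 := by
          calc (n:ℝ)^2 * ‖a n‖^2
              ≤ ∑ m ∈ Finset.range n, ((c0 + B*m)^2 - (m:ℝ)^2) * ‖a m‖^2 := hstep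
            _ ≤ ∑ m ∈ Finset.range n, ((c0 + B*m)^2 - (m:ℝ)^2) * (P m)^2 :=
                Finset.sum_le_sum hterm
            _ = (n:ℝ)^2 * (P n)^2 := by
                rw [← hid]
        have hnpos : (0:ℝ) < (n:ℝ)^2 := by
          have : (0:ℝ) < (n:ℝ) := by exact_mod_cast hn1
          positivity
        have h2 : ‖a n‖^2 ≤ (P n)^2 := by
          have := (mul_le_mul_iff_right₀ hnpos).mp hfin
          linarith
        nlinarith [norm_nonneg (a n)]
  exact claim l hl2
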